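/- For any n×n matrix A over ℂ, |perm(A)| ≤ ‖A‖₂ⁿ, where ‖A‖₂ is the operator 2-norm of A. -/

import Mathlib

open MeasureTheory

/-- The permanent of a complex square matrix. -/
noncomputable def perm {n : ℕ} (A : Matrix (Fin n) (Fin n) ℂ) : ℂ :=
  ∑ σ : Equiv.Perm (Fin n), ∏ i, A i (σ i)

/-- The operator 2-norm of a complex square matrix. -/
noncomputable def opNorm {n : ℕ} (A : Matrix (Fin n) (Fin n) ℂ) : ℝ :=
  ‖LinearMap.toContinuousLinearMap (Matrix.toEuclideanLin A)‖

/-- Uniform probability measure parametrizing `n` i.i.d. points of the unit circle. -/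
noncomputable def circleMeasure (n : ℕ) : Measure (Fin n → ℝ) :=
  Measure.pi fun _ => volume.restrict (Set.Icc 0 1)

/-- The random vector with i.i.d. coordinates uniform on the unit circle. -/
noncomputable def Xc {n : ℕ} (θ : Fin n → ℝ) : Fin n → ℂ :=
  fun i => Complex.exp (2 * Real.pi * Complex.I * (θ i))

set_option synthInstance.maxHeartbeats 1000000
set_option maxHeartbeats 1000000

/- ------------------- auxiliary lemmas ------------------- -/


open Finset

/-- AM-GM consequence. -/
lemma gurvits_amgm {n : ℕ} (hn : 0 < n) (y : Fin n → ℝ) (hy : ∀ i, 0 ≤ y i) (B : ℝ)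
    (hB : 0 ≤ B) (h : ∑ i, y i ^ 2 ≤ B ^ 2 * n) : ∏ i, y i ≤ B ^ n := by
  have hz : ∀ i ∈ univ, (0:ℝ) ≤ y i ^ 2 := fun i _ => sq_nonneg _
  have hw : ∀ i ∈ (univ : Finset (Fin n)), (0:ℝ) ≤ (n:ℝ)⁻¹ :=
    fun i _ => by positivity
  have hw' : ∑ _i : Fin n, (n:ℝ)⁻¹ = 1 := by
    rw [Finset.sum_const, card_univ, Fintype.card_fin, nsmul_eq_mul]
    field_simp
  have h1 := Real.geom_mean_le_arith_mean_weighted univ (fun _ => (n:ℝ)⁻¹)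
      (fun i => y i ^ 2) hw hw' hz
  rw [Real.finset_prod_rpow _ _ hz _] at h1
  have h2 : ∑ i : Fin n, (n:ℝ)⁻¹ * y i ^ 2 ≤ B ^ 2 := by
    rw [← Finset.mul_sum]
    rw [inv_mul_le_iff₀ (by positivity : (0:ℝ) < (n:ℝ))]
    linarith [h]
  have h3 : (∏ i, y i ^ 2) ^ ((n:ℝ)⁻¹) ≤ B ^ 2 := le_trans h1 h2
  have hP : (0:ℝ) ≤ ∏ i, y i ^ 2 := Finset.prod_nonneg hz
  have h4 : (∏ i, y i ^ 2) ≤ (B ^ 2) ^ n := by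
    have := Real.rpow_le_rpow (Real.rpow_nonneg hP _) h3 (Nat.cast_nonneg n)
    rwa [← Real.rpow_mul hP, inv_mul_cancel₀ (by positivity : (n:ℝ) ≠ 0),
      Real.rpow_one, Real.rpow_natCast] at this
  have h5 : (∏ i, y i) ^ 2 ≤ (B ^ n) ^ 2 := by
    calc (∏ i, y i) ^ 2 = ∏ i, y i ^ 2 := by rw [Finset.prod_pow]
    _ ≤ (B ^ 2) ^ n := h4
    _ = (B ^ n) ^ 2 := by ring
  exact (pow_le_pow_iff_left₀ (Finset.prod_nonneg fun i _ => hy i) (by positivity)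
    (by norm_num)).mp h5

lemma gurvits_prod_comp_univ {n : ℕ} (g : Fin n → ℂ) (f : Fin n → Fin n) :
    ∏ i, g (f i) = ∏ j, g j ^ (Finset.univ.filter fun i => f i = j).card := by
  rw [Finset.prod_comp (s := Finset.univ) g f]
  refine Finset.prod_subset (Finset.subset_univ _) ?_
  intro j _ hj
  have hc : (Finset.univ.filter fun i => f i = j).card = 0 := by
    rw [Finset.card_eq_zero, Finset.filter_eq_empty_iff]
    exact fun i _ h => hj (Finset.mem_image.mpr ⟨i, Finset.mem_univ i, h⟩)
  simp [hc]

lemma gurvits_sum_bijective {n : ℕ} (A : Matrix (Fin n) (Fin n) ℂ) :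
    ∑ f ∈ Finset.univ.filter (fun f : Fin n → Fin n => Function.Bijective f),
      ∏ i, A i (f i) = perm A := by
  classical
  rw [perm]
  symm
  apply Finset.sum_bij (fun (σ : Equiv.Perm (Fin n)) _ => (σ : Fin n → Fin n))
  · intro σ _
    exact Finset.mem_filter.mpr ⟨Finset.mem_univ _, σ.bijective⟩
  · intro a _ b _ h
    exact Equiv.coe_fn_injective h
  · intro f hf
    refine ⟨Equiv.ofBijective f ?_, Finset.mem_univ _, rfl⟩
    simpa using hf
  · intro σ _
    rfl

lemma gurvits_key {n : ℕ} (hn : 0 < n) (A : Matrix (Fin n) (Fin n) ℂ) :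
    ∑ k : Fin n → Fin (n+1),
        (∏ i, (starRingEnd ℂ)
            (Complex.exp (2 * Real.pi * Complex.I / (n+1 : ℕ)) ^ (k i : ℕ))) *
          ∏ i, A.mulVec
            (fun j => Complex.exp (2 * Real.pi * Complex.I / (n+1 : ℕ)) ^ (k j : ℕ)) i
      = ((n+1 : ℕ) : ℂ) ^ n * perm A := by
  classical
  set ω : ℂ := Complex.exp (2 * Real.pi * Complex.I / (n+1 : ℕ)) with hω
  have hprim : IsPrimitiveRoot ω (n+1) := Complex.isPrimitiveRoot_exp (n+1) (Nat.succ_ne_zero n)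
  have habs : ‖ω‖ = 1 := by
    have : (2 * Real.pi * Complex.I / (n+1 : ℕ) : ℂ)
        = ((2 * Real.pi / (n+1 : ℕ) : ℝ) : ℂ) * Complex.I := by
      push_cast
      ring
    rw [hω, this, Complex.norm_exp_ofReal_mul_I]
  have hω0 : ω ≠ 0 := by
    intro h
    rw [h] at habs
    simp at habs
  set x : (Fin n → Fin (n+1)) → Fin n → ℂ := fun k j => ω ^ (k j : ℕ) with hx
  have hxabs : ∀ k j, ‖x k j‖ = 1 := by
    intro k j
    rw [hx]
    simp [map_pow, habs]
  have hx0 : ∀ k j, x k j ≠ 0 := fun k j => pow_ne_zero _ hω0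
  set c : (Fin n → Fin n) → Fin n → ℕ :=
    fun f j => (Finset.univ.filter fun i => f i = j).card with hc
  set m : (Fin n → Fin n) → Fin n → ℤ := fun f j => (c f j : ℤ) - 1 with hm
  set G : ℤ → ℂ := fun t => ∑ s : Fin (n+1), (ω ^ t) ^ (s : ℕ) with hG
  -- value of G
  have hG0 : G 0 = ((n+1 : ℕ) : ℂ) := by
    rw [hG]
    simp
  have hGz : ∀ t : ℤ, t ≠ 0 → -((n:ℤ)+1) < t → t < (n:ℤ)+1 → G t = 0 := by
    intro t ht hlb hub
    have hdvd : ¬ (((n:ℤ)+1) ∣ t) := by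
      intro hd
      exact ht (Int.eq_zero_of_abs_lt_dvd hd (abs_lt.mpr ⟨hlb, hub⟩))
    have hne : ω ^ t ≠ 1 := by
      intro h
      apply hdvd
      have := (hprim.zpow_eq_one_iff_dvd t).mp h
      exact_mod_cast this
    have hpow : (ω ^ t) ^ (n+1) = 1 := by
      rw [← zpow_natCast (ω ^ t) (n+1), ← zpow_mul, mul_comm, zpow_mul, zpow_natCast,
        hprim.pow_eq_one, one_zpow]
    show (∑ s : Fin (n+1), (ω ^ t) ^ (s : ℕ)) = 0
    rw [Fin.sum_univ_eq_sum_range (fun s => (ω ^ t) ^ s) (n+1), geom_sum_eq hne, hpow]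
    simp
  -- the inner sum over k for fixed f
  have hW : ∀ f : Fin n → Fin n,
      (∑ k : Fin n → Fin (n+1), ∏ i, (x k (f i) * (starRingEnd ℂ) (x k i)))
        = if Function.Bijective f then ((n+1 : ℕ) : ℂ) ^ n else 0 := by
    intro f
    have step1 : ∀ k, ∏ i, (x k (f i) * (starRingEnd ℂ) (x k i))
        = ∏ j, (ω ^ m f j) ^ ((k j : ℕ)) := by
      intro k
      rw [Finset.prod_mul_distrib]
      rw [gurvits_prod_comp_univ (x k) f]
      have hconj : ∀ i, (starRingEnd ℂ) (x k i) = (x k i)⁻¹ :=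
        fun i => ((Complex.inv_eq_conj (hxabs k i)).symm)
      rw [Finset.prod_congr rfl (fun i _ => hconj i), ← Finset.prod_mul_distrib]
      refine Finset.prod_congr rfl fun j _ => ?_
      rw [← zpow_natCast (x k j) (c f j), ← zpow_neg_one (x k j),
        ← zpow_add₀ (hx0 k j)]
      have h2 : (c f j : ℤ) + (-1) = m f j := by rw [hm]; ring
      rw [h2]
      show (ω ^ ((k j) : ℕ)) ^ (m f j) = (ω ^ m f j) ^ ((k j : ℕ))
      rw [← zpow_natCast ω ((k j : ℕ)), ← zpow_mul, mul_comm, zpow_mul, zpow_natCast]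
    rw [Finset.sum_congr rfl (fun k _ => step1 k)]
    have step2 : (∑ k : Fin n → Fin (n+1), ∏ j, (ω ^ m f j) ^ ((k j : ℕ)))
        = ∏ j, G (m f j) := by
      have h := Finset.sum_prod_piFinset (κ := Fin (n+1)) univ
        (fun (j : Fin n) (t : Fin (n+1)) => (ω ^ m f j) ^ (t : ℕ))
      rw [Fintype.piFinset_univ] at h
      exact h
    rw [step2]
    by_cases hf : Function.Bijective f
    · rw [if_pos hf]
      have hc1 : ∀ j, c f j = 1 := by
        intro j
        rw [hc]
        rw [Finset.card_eq_one]
        refine ⟨(Equiv.ofBijective f hf).symm j, ?_⟩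
        ext i
        simp only [Finset.mem_filter, Finset.mem_univ, true_and, Finset.mem_singleton]
        constructor
        · intro h
          apply hf.injective
          rw [h, Equiv.ofBijective_apply_symm_apply f hf j]
        · intro h
          rw [h]
          exact Equiv.ofBijective_apply_symm_apply f hf j
      have hm0 : ∀ j, m f j = 0 := by
        intro j
        rw [hm]
        simp [hc1 j]
      calc ∏ j, G (m f j) = ∏ _j : Fin n, ((n+1 : ℕ) : ℂ) := by
            exact Finset.prod_congr rfl fun j _ => by rw [hm0 j, hG0]
        _ = ((n+1 : ℕ) : ℂ) ^ n := by
            rw [Finset.prod_const, Finset.card_univ, Fintype.card_fin]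
    · rw [if_neg hf]
      have hj : ∃ j, c f j ≠ 1 := by
        by_contra hall
        push_neg at hall
        apply hf
        rw [Fintype.bijective_iff_injective_and_card]
        refine ⟨?_, rfl⟩
        intro a b hab
        have h1 : a ∈ Finset.univ.filter fun i => f i = f b := by
          simp [hab]
        have h2 : b ∈ Finset.univ.filter fun i => f i = f b := by
          simp
        exact Finset.card_le_one.mp (le_of_eq (hall (f b))) a h1 b h2
      obtain ⟨j₀, hj₀⟩ := hj
      apply Finset.prod_eq_zero (Finset.mem_univ j₀)
      have hcle : c f j₀ ≤ n := by
        rw [hc]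
        calc (Finset.univ.filter fun i => f i = j₀).card ≤ Finset.univ.card :=
              Finset.card_filter_le _ _
        _ = n := by rw [Finset.card_univ, Fintype.card_fin]
      apply hGz
      · rw [hm]
        simp only
        omega
      · rw [hm]
        simp only
        omega
      · rw [hm]
        simp only
        omega
    -- end hW
  -- main computation
  have hmulvec : ∀ k i, A.mulVec (x k) i = ∑ j, A i j * x k j := by
    intro k i
    simp [Matrix.mulVec, dotProduct]
  calc ∑ k : Fin n → Fin (n+1), (∏ i, (starRingEnd ℂ) (x k i)) * ∏ i, A.mulVec (x k) i
      = ∑ k : Fin n → Fin (n+1), ∑ f : Fin n → Fin n,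
          (∏ i, A i (f i)) * ∏ i, (x k (f i) * (starRingEnd ℂ) (x k i)) := by
        refine Finset.sum_congr rfl fun k _ => ?_
        rw [Finset.prod_congr rfl (fun i _ => hmulvec k i), Finset.prod_univ_sum,
          Fintype.piFinset_univ, Finset.mul_sum]
        refine Finset.sum_congr rfl fun f _ => ?_
        rw [Finset.prod_mul_distrib, Finset.prod_mul_distrib]
        ring
    _ = ∑ f : Fin n → Fin n, (∏ i, A i (f i)) *
          ∑ k : Fin n → Fin (n+1), ∏ i, (x k (f i) * (starRingEnd ℂ) (x k i)) := by
        rw [Finset.sum_comm]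
        exact Finset.sum_congr rfl fun f _ => (Finset.mul_sum _ _ _).symm
    _ = ∑ f : Fin n → Fin n, (∏ i, A i (f i)) *
          (if Function.Bijective f then ((n+1 : ℕ) : ℂ) ^ n else 0) := by
        exact Finset.sum_congr rfl fun f _ => by rw [hW f]
    _ = ((n+1 : ℕ) : ℂ) ^ n * perm A := by
        simp only [mul_ite, mul_zero]
        rw [← Finset.sum_filter, ← Finset.sum_mul, gurvits_sum_bijective, mul_comm]


lemma gurvits_norm_bound {n : ℕ} (A : Matrix (Fin n) (Fin n) ℂ) (x : Fin n → ℂ)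
    (hx : ∀ j, ‖x j‖ = 1) :
    ∑ i, ‖A.mulVec x i‖ ^ 2 ≤ opNorm A ^ 2 * n := by
  set v : EuclideanSpace ℂ (Fin n) := (WithLp.equiv 2 (Fin n → ℂ)).symm x with hv
  have hvnorm : ‖v‖ ^ 2 = n := by
    rw [EuclideanSpace.norm_eq, Real.sq_sqrt (by positivity)]
    simp [hv, hx]
  have h1 : ‖Matrix.toEuclideanLin A v‖ ≤ opNorm A * ‖v‖ := by
    have := (LinearMap.toContinuousLinearMap (Matrix.toEuclideanLin A)).le_opNorm v
    simpa [opNorm] using this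
  have h2 : ‖Matrix.toEuclideanLin A v‖ ^ 2 = ∑ i, ‖A.mulVec x i‖ ^ 2 := by
    rw [hv, Matrix.toEuclideanLin_apply_piLp_toLp, EuclideanSpace.norm_eq,
      Real.sq_sqrt (by positivity)]
    simp
  calc ∑ i, ‖A.mulVec x i‖ ^ 2 = ‖Matrix.toEuclideanLin A v‖ ^ 2 := h2.symm
  _ ≤ (opNorm A * ‖v‖) ^ 2 := by
      apply pow_le_pow_left₀ (norm_nonneg _) h1
  _ = opNorm A ^ 2 * n := by rw [mul_pow, hvnorm]

/-- Gurvits' bound: `|perm A| ≤ ‖A‖₂ ^ n`. -/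
theorem perm_le_opNorm_pow {n : ℕ} (A : Matrix (Fin n) (Fin n) ℂ) :
    ‖perm A‖ ≤ opNorm A ^ n := by
  rcases Nat.eq_zero_or_pos n with hn | hn
  · subst hn
    simp [perm]
  · set ω : ℂ := Complex.exp (2 * Real.pi * Complex.I / (n+1 : ℕ)) with hω
    set x : (Fin n → Fin (n+1)) → Fin n → ℂ := fun k j => ω ^ (k j : ℕ) with hx
    have habs : ‖ω‖ = 1 := by
      have h : (2 * Real.pi * Complex.I / (n+1 : ℕ) : ℂ)
          = ((2 * Real.pi / (n+1 : ℕ) : ℝ) : ℂ) * Complex.I := by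
        push_cast
        ring
      rw [hω, h, Complex.norm_exp_ofReal_mul_I]
    have hxabs : ∀ k j, ‖x k j‖ = 1 := by
      intro k j
      rw [hx]
      simp [map_pow, habs]
    have hkey := gurvits_key hn A
    have hterm : ∀ k : Fin n → Fin (n+1),
        ‖(∏ i, (starRingEnd ℂ) (x k i)) * ∏ i, A.mulVec (x k) i‖
          ≤ opNorm A ^ n := by
      intro k
      rw [norm_mul]
      have h1 : ‖∏ i, (starRingEnd ℂ) (x k i)‖ = 1 := by
        rw [norm_prod]
        rw [Finset.prod_congr rfl fun i _ => (Complex.norm_conj (x k i)).trans (hxabs k i)]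
        simp
      rw [h1, one_mul, norm_prod]
      apply gurvits_amgm hn _ (fun i => norm_nonneg _) _ (norm_nonneg _)
      exact gurvits_norm_bound A (x k) (hxabs k)
    have hS : ‖∑ k : Fin n → Fin (n+1),
        (∏ i, (starRingEnd ℂ) (x k i)) * ∏ i, A.mulVec (x k) i‖
          ≤ ((n+1 : ℕ) : ℝ) ^ n * opNorm A ^ n := by
      calc ‖∑ k : Fin n → Fin (n+1),
            (∏ i, (starRingEnd ℂ) (x k i)) * ∏ i, A.mulVec (x k) i‖
          ≤ ∑ k : Fin n → Fin (n+1),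
            ‖(∏ i, (starRingEnd ℂ) (x k i)) * ∏ i, A.mulVec (x k) i‖ :=
            norm_sum_le _ _
        _ ≤ ∑ _k : Fin n → Fin (n+1), opNorm A ^ n :=
            Finset.sum_le_sum fun k _ => hterm k
        _ = ((n+1 : ℕ) : ℝ) ^ n * opNorm A ^ n := by
            rw [Finset.sum_const, Finset.card_univ, nsmul_eq_mul]
            norm_num [Fintype.card_fun]
    rw [hkey, norm_mul, norm_pow, Complex.norm_natCast] at hS
    have hpos : (0:ℝ) < ((n+1 : ℕ) : ℝ) ^ n := by positivity
    exact le_of_mul_le_mul_left hS hpos
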